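/- arXiv:2407.00441 — 4 statements merged into one kernel-verified Lean document; each statement's English description precedes it below -/
import Mathlib

section
/- Let k > 0, 0 < c < 2√k, ω_d = √(k − c²/4), T̄ > 0, d(t) = e^{−ct/2} cos(ω_d t), s(t) = (1/ω_d) e^{−ct/2} sin(ω_d t). There exists a constant K > 0, depending only on c, ω_d and T̄, such that for every continuous F : [0, T̄] → ℝ, the function x(t) = d(t)∫₀ᵗ F(τ)(d(τ) − (c/2)s(τ)) dτ + s(t)∫₀ᵗ F(τ)((c/2)d(τ) + ω_d² s(τ)) dτ satisfies, for all t ∈ [0, T̄], |x(t)| ≤ K e^{−ct/2} ((1 − e^{−ct})/c)^{1/2} (∫₀ᵗ F(τ)² dτ)^{1/2}, and moreover (∫₀^{T̄} x(t)² dt)^{1/2} ≤ K e^{−cT̄/2} (1 − e^{−cT̄})^{1/2} (∫₀^{T̄} F(τ)² dτ)^{1/2}. -/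
open MeasureTheory intervalIntegral

lemma memL2_of_continuousOn {a b : ℝ} {f : ℝ → ℝ} (hf : ContinuousOn f (Set.Icc a b)) :
    MemLp f (ENNReal.ofReal 2) (volume.restrict (Set.Ioc a b)) := by
  haveI : IsFiniteMeasure (volume.restrict (Set.Ioc a b)) :=
    ⟨by rw [Measure.restrict_apply_univ, Real.volume_Ioc]; exact ENNReal.ofReal_lt_top⟩
  obtain ⟨C, hC⟩ := isCompact_Icc.exists_bound_of_continuousOn hf
  refine MemLp.of_bound ?_ C ?_
  · exact (hf.aestronglyMeasurable measurableSet_Icc).mono_measure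
      (Measure.restrict_mono Set.Ioc_subset_Icc_self le_rfl)
  · refine (ae_restrict_iff' measurableSet_Ioc).2 (Filter.Eventually.of_forall fun x hx => ?_)
    exact hC x (Set.Ioc_subset_Icc_self hx)

lemma cs_interval {a b : ℝ} (hab : a ≤ b) {f g : ℝ → ℝ}
    (hf : ContinuousOn f (Set.Icc a b)) (hg : ContinuousOn g (Set.Icc a b)) :
    (∫ τ in a..b, |f τ| * |g τ|) ≤
      Real.sqrt (∫ τ in a..b, f τ ^ 2) * Real.sqrt (∫ τ in a..b, g τ ^ 2) := by
  rw [intervalIntegral.integral_of_le hab, intervalIntegral.integral_of_le hab,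
    intervalIntegral.integral_of_le hab]
  have h2 : (2 : ℝ).HolderConjugate 2 := Real.HolderConjugate.two_two
  have := MeasureTheory.integral_mul_norm_le_Lp_mul_Lq h2
    (memL2_of_continuousOn hf) (memL2_of_continuousOn hg)
  simp only [Real.norm_eq_abs] at this
  calc (∫ τ in Set.Ioc a b, |f τ| * |g τ|)
      ≤ (∫ τ in Set.Ioc a b, |f τ| ^ (2:ℝ)) ^ (1/(2:ℝ)) *
        (∫ τ in Set.Ioc a b, |g τ| ^ (2:ℝ)) ^ (1/(2:ℝ)) := this
    _ = Real.sqrt (∫ τ in Set.Ioc a b, f τ ^ 2) * Real.sqrt (∫ τ in Set.Ioc a b, g τ ^ 2) := by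
        have key : ∀ (h : ℝ → ℝ), (∫ τ in Set.Ioc a b, |h τ| ^ (2:ℝ)) ^ (1/(2:ℝ))
            = Real.sqrt (∫ τ in Set.Ioc a b, h τ ^ 2) := by
          intro h
          rw [Real.sqrt_eq_rpow]
          congr 1
          refine integral_congr_ae (Filter.Eventually.of_forall fun x => ?_)
          simp only []
          rw [show ((2:ℝ)) = ((2:ℕ):ℝ) by norm_num, Real.rpow_natCast, sq_abs]
        rw [key f, key g]

lemma exp_int {c : ℝ} (hc : c ≠ 0) (t : ℝ) :
    ∫ τ in (0:ℝ)..t, Real.exp (-c * τ) = (1 - Real.exp (-c * t)) / c := by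
  have := intervalIntegral.integral_comp_mul_left (a := 0) (b := t) Real.exp (neg_ne_zero.2 hc)
  simp only [mul_zero, integral_exp, smul_eq_mul] at this
  rw [this, Real.exp_zero]
  rw [inv_neg, div_eq_inv_mul]
  ring

lemma sqrt_int_sq_le {t c C : ℝ} (ht : 0 ≤ t) (hc : 0 < c) (hC : 0 ≤ C) {G : ℝ → ℝ}
    (hG : ContinuousOn G (Set.Icc 0 t))
    (hbound : ∀ τ ∈ Set.Icc (0:ℝ) t, |G τ| ≤ C * Real.exp (-c * τ / 2)) :
    Real.sqrt (∫ τ in (0:ℝ)..t, G τ ^ 2) ≤ C * Real.sqrt ((1 - Real.exp (-c * t)) / c) := by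
  have hmono : (∫ τ in (0:ℝ)..t, G τ ^ 2) ≤ ∫ τ in (0:ℝ)..t, C ^ 2 * Real.exp (-c * τ) := by
    apply intervalIntegral.integral_mono_on ht
    · exact ((hG.pow 2).mono (by rw [Set.uIcc_of_le ht])).intervalIntegrable
    · exact (Continuous.continuousOn (by continuity)).intervalIntegrable
    · intro τ hτ
      have h1 := hbound τ hτ
      have h2 : G τ ^ 2 ≤ (C * Real.exp (-c * τ / 2)) ^ 2 := by
        rw [← sq_abs]
        exact pow_le_pow_left₀ (abs_nonneg _) h1 2
      calc G τ ^ 2 ≤ (C * Real.exp (-c * τ / 2)) ^ 2 := h2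
        _ = C ^ 2 * Real.exp (-c * τ) := by
            have he : Real.exp (-c * τ / 2) ^ 2 = Real.exp (-c * τ) := by
              rw [← Real.exp_nat_mul]; congr 1; push_cast; ring
            rw [mul_pow, he]
  calc Real.sqrt (∫ τ in (0:ℝ)..t, G τ ^ 2)
      ≤ Real.sqrt (C ^ 2 * ((1 - Real.exp (-c * t)) / c)) := by
        apply Real.sqrt_le_sqrt
        rw [← exp_int hc.ne' t, ← intervalIntegral.integral_const_mul]
        exact hmono
    _ = C * Real.sqrt ((1 - Real.exp (-c * t)) / c) := by
        rw [Real.sqrt_mul (sq_nonneg C), Real.sqrt_sq hC]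

lemma key_bound {t c C T : ℝ} (hc : 0 < c) (hC : 0 ≤ C) (ht : t ∈ Set.Icc (0:ℝ) T)
    {F G : ℝ → ℝ} (hF : ContinuousOn F (Set.Icc 0 T))
    (hG : Continuous G)
    (hbound : ∀ τ ∈ Set.Icc (0:ℝ) t, |G τ| ≤ C * Real.exp (-c * τ / 2)) :
    |∫ τ in (0:ℝ)..t, F τ * G τ| ≤
      C * Real.sqrt ((1 - Real.exp (-c * t)) / c) * Real.sqrt (∫ τ in (0:ℝ)..t, F τ ^ 2) := by
  obtain ⟨ht0, htT⟩ := ht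
  have hFt : ContinuousOn F (Set.Icc 0 t) := hF.mono (Set.Icc_subset_Icc le_rfl htT)
  calc |∫ τ in (0:ℝ)..t, F τ * G τ|
      ≤ ∫ τ in (0:ℝ)..t, |F τ * G τ| := by
        exact intervalIntegral.abs_integral_le_integral_abs ht0
    _ = ∫ τ in (0:ℝ)..t, |F τ| * |G τ| := by simp [abs_mul]
    _ ≤ Real.sqrt (∫ τ in (0:ℝ)..t, F τ ^ 2) * Real.sqrt (∫ τ in (0:ℝ)..t, G τ ^ 2) :=
        cs_interval ht0 hFt hG.continuousOn
    _ ≤ Real.sqrt (∫ τ in (0:ℝ)..t, F τ ^ 2) * (C * Real.sqrt ((1 - Real.exp (-c * t)) / c)) := by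
        apply mul_le_mul_of_nonneg_left _ (Real.sqrt_nonneg _)
        exact sqrt_int_sq_le ht0 hc hC hG.continuousOn hbound
    _ = C * Real.sqrt ((1 - Real.exp (-c * t)) / c) * Real.sqrt (∫ τ in (0:ℝ)..t, F τ ^ 2) := by
        ring

set_option maxHeartbeats 1000000 in
/-- Sup-norm and L² bounds on the Duhamel solution with homogeneous initial
conditions: there is `K > 0` (depending only on `c`, `ω_d`, `T̄`) such that for every
continuous `F`, `|x(t)| ≤ K e^{-ct/2}((1 − e^{-ct})/c)^{1/2} ‖F‖_{L²(0,t)}` for all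
`t ∈ [0, T̄]`, and `‖x‖_{L²(0,T̄)} ≤ K e^{-cT̄/2}(1 − e^{-cT̄})^{1/2} ‖F‖_{L²(0,T̄)}`. -/
theorem stmt9 (k c : ℝ) (hk : 0 < k) (hc0 : 0 < c) (hc : c < 2 * Real.sqrt k)
    (ωd : ℝ) (hωd : ωd = Real.sqrt (k - c ^ 2 / 4))
    (T : ℝ) (hT : 0 < T)
    (d s : ℝ → ℝ)
    (hd : d = fun t => Real.exp (-c * t / 2) * Real.cos (ωd * t))
    (hs : s = fun t => (1 / ωd) * Real.exp (-c * t / 2) * Real.sin (ωd * t)) :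
    ∃ K : ℝ, 0 < K ∧
      ∀ F : ℝ → ℝ, ContinuousOn F (Set.Icc 0 T) →
        ∀ x : ℝ → ℝ,
          x = (fun t =>
            d t * (∫ τ in (0:ℝ)..t, F τ * (d τ - (c / 2) * s τ))
            + s t * ∫ τ in (0:ℝ)..t, F τ * ((c / 2) * d τ + ωd ^ 2 * s τ)) →
          (∀ t ∈ Set.Icc (0:ℝ) T,
            |x t| ≤ K * Real.exp (-c * t / 2) *
              Real.sqrt ((1 - Real.exp (-c * t)) / c) *
              Real.sqrt (∫ τ in (0:ℝ)..t, F τ ^ 2)) ∧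
          Real.sqrt (∫ t in (0:ℝ)..T, x t ^ 2) ≤
            K * Real.exp (-c * T / 2) * Real.sqrt (1 - Real.exp (-c * T)) *
              Real.sqrt (∫ τ in (0:ℝ)..T, F τ ^ 2) := by
  -- ωd is positive
  have hkc : 0 < k - c ^ 2 / 4 := by
    have h1 : Real.sqrt k ^ 2 = k := Real.sq_sqrt hk.le
    nlinarith [Real.sqrt_nonneg k]
  have hω0 : 0 < ωd := hωd ▸ Real.sqrt_pos.2 hkc
  -- continuity of d, s
  have hdc : Continuous d := by rw [hd]; fun_prop
  have hsc : Continuous s := by rw [hs]; fun_prop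
  -- bounds on d and s
  have hdb : ∀ τ, |d τ| ≤ Real.exp (-c * τ / 2) := by
    intro τ; rw [hd]
    simp only [abs_mul, Real.abs_exp]
    calc Real.exp (-c * τ / 2) * |Real.cos (ωd * τ)|
        ≤ Real.exp (-c * τ / 2) * 1 :=
          mul_le_mul_of_nonneg_left (Real.abs_cos_le_one _) (Real.exp_pos _).le
      _ = Real.exp (-c * τ / 2) := mul_one _
  have hsb : ∀ τ, |s τ| ≤ (1 / ωd) * Real.exp (-c * τ / 2) := by
    intro τ; rw [hs]
    simp only [abs_mul, Real.abs_exp, abs_of_pos (by positivity : (0:ℝ) < 1 / ωd)]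
    calc 1 / ωd * Real.exp (-c * τ / 2) * |Real.sin (ωd * τ)|
        ≤ 1 / ωd * Real.exp (-c * τ / 2) * 1 :=
          mul_le_mul_of_nonneg_left (Real.abs_sin_le_one _) (by positivity)
      _ = 1 / ωd * Real.exp (-c * τ / 2) := mul_one _
  set C₁ : ℝ := 1 + c / 2 * (1 / ωd) with hC₁
  set C₂ : ℝ := c / 2 + ωd with hC₂
  have hC₁0 : 0 < C₁ := by positivity
  have hC₂0 : 0 < C₂ := by positivity
  set K₀ : ℝ := C₁ + 1 / ωd * C₂ with hK₀
  have hK₀0 : 0 < K₀ := by positivity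
  set A : ℝ := Real.exp (-c * T / 2) * Real.sqrt (1 - Real.exp (-c * T)) with hA
  have hA0 : 0 < A := by
    apply mul_pos (Real.exp_pos _)
    apply Real.sqrt_pos.2
    have : Real.exp (-c * T) < 1 := by
      rw [Real.exp_lt_one_iff]; nlinarith
    linarith
  refine ⟨K₀ * max 1 (Real.sqrt (T * (1 / c)) / A), by positivity, ?_⟩
  intro F hF x hx
  -- bounds on the two kernel functions
  have hG1 : ∀ τ, |d τ - c / 2 * s τ| ≤ C₁ * Real.exp (-c * τ / 2) := by
    intro τ
    calc |d τ - c / 2 * s τ| ≤ |d τ| + c / 2 * |s τ| := by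
          calc |d τ - c / 2 * s τ| ≤ |d τ| + |c / 2 * s τ| := abs_sub _ _
            _ = |d τ| + c / 2 * |s τ| := by
                rw [abs_mul, abs_of_nonneg (by positivity : (0:ℝ) ≤ c/2)]
      _ ≤ Real.exp (-c * τ / 2) + c / 2 * (1 / ωd * Real.exp (-c * τ / 2)) := by
          have := hsb τ
          have := hdb τ
          nlinarith [hsb τ, hdb τ, (by positivity : (0:ℝ) ≤ c/2)]
      _ = C₁ * Real.exp (-c * τ / 2) := by rw [hC₁]; ring
  have hG2 : ∀ τ, |c / 2 * d τ + ωd ^ 2 * s τ| ≤ C₂ * Real.exp (-c * τ / 2) := by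
    intro τ
    calc |c / 2 * d τ + ωd ^ 2 * s τ| ≤ c / 2 * |d τ| + ωd ^ 2 * |s τ| := by
          calc |c / 2 * d τ + ωd ^ 2 * s τ| ≤ |c / 2 * d τ| + |ωd ^ 2 * s τ| := abs_add_le _ _
            _ = c / 2 * |d τ| + ωd ^ 2 * |s τ| := by
                rw [abs_mul, abs_mul, abs_of_nonneg (by positivity : (0:ℝ) ≤ c/2),
                  abs_of_nonneg (sq_nonneg ωd)]
      _ ≤ c / 2 * Real.exp (-c * τ / 2) + ωd ^ 2 * (1 / ωd * Real.exp (-c * τ / 2)) := by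
          nlinarith [hsb τ, hdb τ, (by positivity : (0:ℝ) ≤ c/2), sq_nonneg ωd]
      _ = C₂ * Real.exp (-c * τ / 2) := by
          have hωω : ωd ^ 2 * (1 / ωd) = ωd := by
            rw [pow_two, mul_one_div, mul_div_assoc, div_self hω0.ne', mul_one]
          rw [hC₂]
          linear_combination Real.exp (-c * τ / 2) * hωω
  -- pointwise bound with constant K₀
  have hpt : ∀ t ∈ Set.Icc (0:ℝ) T, |x t| ≤ K₀ * Real.exp (-c * t / 2) *
      Real.sqrt ((1 - Real.exp (-c * t)) / c) * Real.sqrt (∫ τ in (0:ℝ)..t, F τ ^ 2) := by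
    intro t ht
    have hI1 := key_bound hc0 hC₁0.le ht hF (hdc.sub (continuous_const.mul hsc))
      (fun τ _ => hG1 τ)
    have hI2 := key_bound hc0 hC₂0.le ht hF
      ((continuous_const.mul hdc).add (continuous_const.mul hsc)) (fun τ _ => hG2 τ)
    rw [hx]
    set S := Real.sqrt ((1 - Real.exp (-c * t)) / c)
    set Q := Real.sqrt (∫ τ in (0:ℝ)..t, F τ ^ 2)
    have hS : 0 ≤ S := Real.sqrt_nonneg _
    have hQ : 0 ≤ Q := Real.sqrt_nonneg _
    have hE : (0:ℝ) < Real.exp (-c * t / 2) := Real.exp_pos _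
    calc |d t * (∫ τ in (0:ℝ)..t, F τ * (d τ - c / 2 * s τ))
          + s t * ∫ τ in (0:ℝ)..t, F τ * (c / 2 * d τ + ωd ^ 2 * s τ)|
        ≤ |d t| * |∫ τ in (0:ℝ)..t, F τ * (d τ - c / 2 * s τ)|
          + |s t| * |∫ τ in (0:ℝ)..t, F τ * (c / 2 * d τ + ωd ^ 2 * s τ)| := by
          rw [← abs_mul, ← abs_mul]; exact abs_add_le _ _
      _ ≤ Real.exp (-c * t / 2) * (C₁ * S * Q)
          + 1 / ωd * Real.exp (-c * t / 2) * (C₂ * S * Q) := by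
          have h1 : |d t| * |∫ τ in (0:ℝ)..t, F τ * (d τ - c / 2 * s τ)|
              ≤ Real.exp (-c * t / 2) * (C₁ * S * Q) :=
            mul_le_mul (hdb t) hI1 (abs_nonneg _) hE.le
          have h2 : |s t| * |∫ τ in (0:ℝ)..t, F τ * (c / 2 * d τ + ωd ^ 2 * s τ)|
              ≤ 1 / ωd * Real.exp (-c * t / 2) * (C₂ * S * Q) :=
            mul_le_mul (hsb t) hI2 (abs_nonneg _) (by positivity)
          exact add_le_add h1 h2
      _ = K₀ * Real.exp (-c * t / 2) * S * Q := by rw [hK₀]; ring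
  constructor
  · -- sup bound
    intro t ht
    have h1 := hpt t ht
    have hmax : K₀ ≤ K₀ * max 1 (Real.sqrt (T * (1 / c)) / A) := by
      have h := mul_le_mul_of_nonneg_left
        (le_max_left (1:ℝ) (Real.sqrt (T * (1 / c)) / A)) hK₀0.le
      linarith [h]
    calc |x t| ≤ K₀ * Real.exp (-c * t / 2) *
          Real.sqrt ((1 - Real.exp (-c * t)) / c) * Real.sqrt (∫ τ in (0:ℝ)..t, F τ ^ 2) := h1
      _ ≤ K₀ * max 1 (Real.sqrt (T * (1 / c)) / A) * Real.exp (-c * t / 2) *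
          Real.sqrt ((1 - Real.exp (-c * t)) / c) * Real.sqrt (∫ τ in (0:ℝ)..t, F τ ^ 2) := by
          gcongr
  · -- L² bound
    set QT := Real.sqrt (∫ τ in (0:ℝ)..T, F τ ^ 2) with hQT
    have hQT0 : 0 ≤ QT := Real.sqrt_nonneg _
    set M : ℝ := K₀ * Real.sqrt (1 / c) * QT with hM
    have hM0 : 0 ≤ M := by positivity
    have hIccT : Set.uIcc (0:ℝ) T = Set.Icc 0 T := Set.uIcc_of_le hT.le
    -- continuity of x on [0, T]
    have hP1 : ContinuousOn (fun t => ∫ τ in (0:ℝ)..t, F τ * (d τ - c / 2 * s τ))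
        (Set.Icc 0 T) := by
      have := intervalIntegral.continuousOn_primitive_interval
        (μ := MeasureTheory.volume) (a := (0:ℝ)) (b := T)
        (f := fun τ => F τ * (d τ - c / 2 * s τ)) ?_
      · rwa [hIccT] at this
      · rw [hIccT]
        exact (hF.mul (hdc.sub (continuous_const.mul hsc)).continuousOn).integrableOn_compact
          isCompact_Icc
    have hP2 : ContinuousOn (fun t => ∫ τ in (0:ℝ)..t, F τ * (c / 2 * d τ + ωd ^ 2 * s τ))
        (Set.Icc 0 T) := by
      have := intervalIntegral.continuousOn_primitive_interval
        (μ := MeasureTheory.volume) (a := (0:ℝ)) (b := T)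
        (f := fun τ => F τ * (c / 2 * d τ + ωd ^ 2 * s τ)) ?_
      · rwa [hIccT] at this
      · rw [hIccT]
        exact (hF.mul ((continuous_const.mul hdc).add
          (continuous_const.mul hsc)).continuousOn).integrableOn_compact isCompact_Icc
    have hxc : ContinuousOn x (Set.Icc 0 T) := by
      rw [hx]
      exact (hdc.continuousOn.mul hP1).add (hsc.continuousOn.mul hP2)
    -- F² is interval integrable
    have hF2int : IntervalIntegrable (fun τ => F τ ^ 2) MeasureTheory.volume 0 T :=
      ((hF.pow 2).mono (le_of_eq hIccT)).intervalIntegrable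
    -- pointwise bound |x t| ≤ M on [0, T]
    have hxM : ∀ t ∈ Set.Icc (0:ℝ) T, |x t| ≤ M := by
      intro t ht
      obtain ⟨ht0, htT⟩ := ht
      have hE1 : Real.exp (-c * t / 2) ≤ 1 := Real.exp_le_one_iff.2 (by nlinarith)
      have hS1 : Real.sqrt ((1 - Real.exp (-c * t)) / c) ≤ Real.sqrt (1 / c) := by
        apply Real.sqrt_le_sqrt
        have h := Real.exp_nonneg (-c * t)
        gcongr
        linarith
      have hQt : Real.sqrt (∫ τ in (0:ℝ)..t, F τ ^ 2) ≤ QT := by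
        apply Real.sqrt_le_sqrt
        apply intervalIntegral.integral_mono_interval le_rfl ht0 htT
        · exact Filter.Eventually.of_forall fun τ => sq_nonneg _
        · exact hF2int
      calc |x t| ≤ K₀ * Real.exp (-c * t / 2) *
          Real.sqrt ((1 - Real.exp (-c * t)) / c) * Real.sqrt (∫ τ in (0:ℝ)..t, F τ ^ 2) :=
            hpt t ⟨ht0, htT⟩
        _ ≤ K₀ * 1 * Real.sqrt (1 / c) * QT := by
            apply mul_le_mul _ hQt (Real.sqrt_nonneg _) (by positivity)
            apply mul_le_mul _ hS1 (Real.sqrt_nonneg _) (by positivity)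
            exact mul_le_mul_of_nonneg_left hE1 hK₀0.le
        _ = M := by rw [hM]; ring
    -- the L² estimate
    have hint : (∫ t in (0:ℝ)..T, x t ^ 2) ≤ T * M ^ 2 := by
      have h1 : (∫ t in (0:ℝ)..T, x t ^ 2) ≤ ∫ t in (0:ℝ)..T, M ^ 2 := by
        apply intervalIntegral.integral_mono_on hT.le
        · exact ((hxc.pow 2).mono (le_of_eq hIccT)).intervalIntegrable
        · exact intervalIntegrable_const
        · intro t ht
          have := hxM t ht
          calc x t ^ 2 = |x t| ^ 2 := (sq_abs _).symm
            _ ≤ M ^ 2 := pow_le_pow_left₀ (abs_nonneg _) this 2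
      rwa [intervalIntegral.integral_const, smul_eq_mul, sub_zero] at h1
    have hsqrt : Real.sqrt (∫ t in (0:ℝ)..T, x t ^ 2) ≤ K₀ * Real.sqrt (T * (1 / c)) * QT := by
      calc Real.sqrt (∫ t in (0:ℝ)..T, x t ^ 2) ≤ Real.sqrt (T * M ^ 2) :=
            Real.sqrt_le_sqrt hint
        _ = Real.sqrt T * M := by
            rw [Real.sqrt_mul hT.le, Real.sqrt_sq hM0]
        _ = K₀ * (Real.sqrt T * Real.sqrt (1 / c)) * QT := by rw [hM]; ring
        _ = K₀ * Real.sqrt (T * (1 / c)) * QT := by rw [Real.sqrt_mul hT.le]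
    -- compare with the claimed right-hand side
    have hKA : K₀ * Real.sqrt (T * (1 / c)) ≤
        K₀ * max 1 (Real.sqrt (T * (1 / c)) / A) * A := by
      have h1 : Real.sqrt (T * (1 / c)) / A ≤ max 1 (Real.sqrt (T * (1 / c)) / A) :=
        le_max_right _ _
      have h2 : Real.sqrt (T * (1 / c)) ≤ max 1 (Real.sqrt (T * (1 / c)) / A) * A := by
        rw [← div_le_iff₀ hA0] at *
        exact h1
      calc K₀ * Real.sqrt (T * (1 / c))
          ≤ K₀ * (max 1 (Real.sqrt (T * (1 / c)) / A) * A) :=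
            mul_le_mul_of_nonneg_left h2 hK₀0.le
        _ = K₀ * max 1 (Real.sqrt (T * (1 / c)) / A) * A := by ring
    calc Real.sqrt (∫ t in (0:ℝ)..T, x t ^ 2)
        ≤ K₀ * Real.sqrt (T * (1 / c)) * QT := hsqrt
      _ ≤ K₀ * max 1 (Real.sqrt (T * (1 / c)) / A) * A * QT :=
          mul_le_mul_of_nonneg_right hKA hQT0
      _ = K₀ * max 1 (Real.sqrt (T * (1 / c)) / A) * Real.exp (-c * T / 2) *
          Real.sqrt (1 - Real.exp (-c * T)) * QT := by rw [hA]; ring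
end

section
/- Let k > 0, 0 < c < 2√k, ω_d = √(k − c²/4), T̄ > 0. There exists a constant K > 0, depending only on c, k and T̄, such that for every continuous F : [0, T̄] → ℝ, the function x(t) = d(t)∫₀ᵗ F(τ)(d(τ) − (c/2)s(τ)) dτ + s(t)∫₀ᵗ F(τ)((c/2)d(τ) + ω_d² s(τ)) dτ, with d(t) = e^{−ct/2} cos(ω_d t) and s(t) = (1/ω_d) e^{−ct/2} sin(ω_d t), has derivative satisfying (∫₀^{T̄} ẋ(t)² dt)^{1/2} ≤ K ( (∫₀^{T̄} x(t)² dt)^{1/2} + (∫₀^{T̄} e^{−2ct} F(t)² dt)^{1/2} ). -/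
open MeasureTheory intervalIntegral Set

lemma stmt11_pt (a m : ℝ) (hm : 0 < m) : a ≤ (m + a ^ 2 / m) / 2 := by
  rw [le_div_iff₀ (by norm_num : (0:ℝ) < 2), ← sub_nonneg]
  have h : m + a ^ 2 / m - a * 2 = (a - m) ^ 2 / m := by field_simp; ring
  rw [h]; positivity

lemma stmt11_cs (T c : ℝ) (hT : 0 < T) (F : ℝ → ℝ)
    (hF : ContinuousOn F (Set.Icc 0 T)) :
    (∫ τ in (0:ℝ)..T, Real.exp (-c * τ) * |F τ|) ≤
      (T + 1) / 2 * Real.sqrt (∫ t in (0:ℝ)..T, Real.exp (-2 * c * t) * F t ^ 2) := by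
  set N := Real.sqrt (∫ t in (0:ℝ)..T, Real.exp (-2 * c * t) * F t ^ 2) with hN
  have hNnn : 0 ≤ N := Real.sqrt_nonneg _
  have hw : ContinuousOn (fun t => Real.exp (-2 * c * t) * F t ^ 2) (Set.Icc 0 T) := by
    exact (Real.continuous_exp.comp (by continuity)).continuousOn.mul (hF.pow 2)
  have hwint : IntervalIntegrable (fun t => Real.exp (-2 * c * t) * F t ^ 2) volume 0 T := by
    apply ContinuousOn.intervalIntegrable; rwa [Set.uIcc_of_le hT.le]
  have hintnn : 0 ≤ ∫ t in (0:ℝ)..T, Real.exp (-2 * c * t) * F t ^ 2 :=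
    intervalIntegral.integral_nonneg hT.le (fun u _ => by positivity)
  have hN2 : N ^ 2 = ∫ t in (0:ℝ)..T, Real.exp (-2 * c * t) * F t ^ 2 :=
    Real.sq_sqrt hintnn
  have hIc : ContinuousOn (fun τ => Real.exp (-c * τ) * |F τ|) (Set.Icc 0 T) :=
    (Real.continuous_exp.comp (by continuity)).continuousOn.mul hF.abs
  have hIint : IntervalIntegrable (fun τ => Real.exp (-c * τ) * |F τ|) volume 0 T := by
    apply ContinuousOn.intervalIntegrable; rwa [Set.uIcc_of_le hT.le]
  apply le_of_forall_pos_le_add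
  intro ε hε
  set m := N + 2 * ε / (T + 1) with hm
  have hmpos : 0 < m := by positivity
  have key : ∀ τ ∈ Set.Icc (0:ℝ) T,
      Real.exp (-c * τ) * |F τ| ≤ (m + Real.exp (-2 * c * τ) * F τ ^ 2 / m) / 2 := by
    intro τ _
    have he2 : Real.exp (-c * τ) ^ 2 = Real.exp (-2 * c * τ) := by
      rw [sq, ← Real.exp_add]; ring_nf
    have hsq : (Real.exp (-c * τ) * |F τ|) ^ 2 = Real.exp (-2 * c * τ) * F τ ^ 2 := by
      rw [mul_pow, sq_abs, he2]
    calc Real.exp (-c * τ) * |F τ|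
        ≤ (m + (Real.exp (-c * τ) * |F τ|) ^ 2 / m) / 2 := stmt11_pt _ _ hmpos
      _ = (m + Real.exp (-2 * c * τ) * F τ ^ 2 / m) / 2 := by rw [hsq]
  have hrhs_int : IntervalIntegrable
      (fun τ => (m + Real.exp (-2 * c * τ) * F τ ^ 2 / m) / 2) volume 0 T := by
    apply ContinuousOn.intervalIntegrable; rw [Set.uIcc_of_le hT.le]
    exact ((continuousOn_const.add (hw.div_const m)).div_const 2)
  have step1 : (∫ τ in (0:ℝ)..T, Real.exp (-c * τ) * |F τ|) ≤
      ∫ τ in (0:ℝ)..T, (m + Real.exp (-2 * c * τ) * F τ ^ 2 / m) / 2 :=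
    intervalIntegral.integral_mono_on hT.le hIint hrhs_int key
  have step2 : (∫ τ in (0:ℝ)..T, (m + Real.exp (-2 * c * τ) * F τ ^ 2 / m) / 2)
      = (T * m + N ^ 2 / m) / 2 := by
    have : (∫ τ in (0:ℝ)..T, (m + Real.exp (-2 * c * τ) * F τ ^ 2 / m) / 2)
        = (∫ τ in (0:ℝ)..T, (m + Real.exp (-2 * c * τ) * F τ ^ 2 / m)) / 2 := by
      rw [← intervalIntegral.integral_div]
    rw [this, intervalIntegral.integral_add intervalIntegrable_const (hwint.div_const m),
      intervalIntegral.integral_const, intervalIntegral.integral_div, ← hN2]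
    simp only [smul_eq_mul, sub_zero]
    try ring
  have hNm : N ≤ m := le_add_of_nonneg_right (by positivity)
  have hNle : N ^ 2 / m ≤ m := by
    rw [div_le_iff₀ hmpos]; nlinarith
  calc (∫ τ in (0:ℝ)..T, Real.exp (-c * τ) * |F τ|)
      ≤ (T * m + N ^ 2 / m) / 2 := step2 ▸ step1
    _ ≤ (T * m + m) / 2 := by linarith
    _ = (T + 1) / 2 * m := by ring
    _ = (T + 1) / 2 * N + ε := by
        have h1 : T + 1 ≠ 0 := by positivity
        rw [hm, mul_add]
        congr 1
        field_simp

lemma stmt11_aux (a b n : ℝ) (ha : 0 ≤ a) (hb : 0 ≤ b) (hn : 0 ≤ n) :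
    a * n ≤ (a + 1) * (b + n) := by nlinarith [mul_nonneg ha hb]

set_option maxHeartbeats 1000000 in
/-- L² bound on the velocity. There is `K > 0` (depending only on `c`, `k`,
`T̄`) such that for all continuous `F`, the Duhamel solution
`x(t) = d(t)∫₀ᵗ F(d − (c/2)s) + s(t)∫₀ᵗ F((c/2)d + ω_d²s)` satisfies
`‖ẋ‖_{L²(0,T̄)} ≤ K(‖x‖_{L²(0,T̄)} + ‖e^{-c·}F‖_{L²(0,T̄)})`. -/
theorem stmt11 (k c : ℝ) (hk : 0 < k) (hc0 : 0 < c) (hc : c < 2 * Real.sqrt k)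
    (ωd : ℝ) (hωd : ωd = Real.sqrt (k - c ^ 2 / 4))
    (T : ℝ) (hT : 0 < T)
    (d s : ℝ → ℝ)
    (hd : d = fun t => Real.exp (-c * t / 2) * Real.cos (ωd * t))
    (hs : s = fun t => (1 / ωd) * Real.exp (-c * t / 2) * Real.sin (ωd * t)) :
    ∃ K : ℝ, 0 < K ∧
      ∀ F : ℝ → ℝ, ContinuousOn F (Set.Icc 0 T) →
        ∀ x : ℝ → ℝ,
          x = (fun t =>
            d t * (∫ τ in (0:ℝ)..t, F τ * (d τ - (c / 2) * s τ))
            + s t * ∫ τ in (0:ℝ)..t, F τ * ((c / 2) * d τ + ωd ^ 2 * s τ)) →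
          Real.sqrt (∫ t in (0:ℝ)..T, (deriv x t) ^ 2) ≤
            K * (Real.sqrt (∫ t in (0:ℝ)..T, x t ^ 2) +
                 Real.sqrt (∫ t in (0:ℝ)..T, Real.exp (-2 * c * t) * F t ^ 2)) := by
  have hkc : 0 < k - c ^ 2 / 4 := by
    nlinarith [Real.sq_sqrt hk.le, Real.sqrt_nonneg k]
  have hωpos : 0 < ωd := by rw [hωd]; exact Real.sqrt_pos.mpr hkc
  have hωne : ωd ≠ 0 := ne_of_gt hωpos
  have hdc : Continuous d := by rw [hd]; continuity
  have hsc : Continuous s := by rw [hs]; continuity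
  -- derivatives of d and s
  have hexp : ∀ t : ℝ, HasDerivAt (fun u : ℝ => Real.exp (-c * u / 2))
      (-c / 2 * Real.exp (-c * t / 2)) t := by
    intro t
    have h0 : HasDerivAt (fun u : ℝ => -c * u / 2) (-c / 2) t := by
      simpa using ((hasDerivAt_id t).const_mul (-c)).div_const 2
    simpa [mul_comm] using h0.exp
  have hlin : ∀ t : ℝ, HasDerivAt (fun u : ℝ => ωd * u) ωd t := by
    intro t; simpa using (hasDerivAt_id t).const_mul ωd
  have hd' : ∀ t : ℝ, HasDerivAt d (-(c / 2) * d t - ωd ^ 2 * s t) t := by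
    intro t
    rw [hd, hs]
    have := (hexp t).mul ((hlin t).cos)
    refine this.congr_deriv ?_
    beta_reduce
    field_simp
    ring
  have hs' : ∀ t : ℝ, HasDerivAt s (d t - c / 2 * s t) t := by
    intro t
    rw [hd, hs]
    have := (((hexp t).const_mul (1 / ωd)).mul ((hlin t).sin))
    refine this.congr_deriv ?_
    beta_reduce
    field_simp
    ring
  -- pointwise bounds
  set M : ℝ := 1 + c / 2 * (1 / ωd) + c / 2 + ωd ^ 2 * (1 / ωd) with hMdef
  have hMpos : 0 < M := by positivity
  have hdabs : ∀ τ : ℝ, |d τ| ≤ Real.exp (-c * τ / 2) := by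
    intro τ; rw [hd]
    simp only [abs_mul, Real.abs_exp]
    exact mul_le_of_le_one_right (Real.exp_pos _).le (Real.abs_cos_le_one _)
  have hsabs : ∀ τ : ℝ, |s τ| ≤ 1 / ωd * Real.exp (-c * τ / 2) := by
    intro τ; rw [hs]
    simp only [abs_mul, Real.abs_exp, abs_of_pos (by positivity : (0:ℝ) < 1 / ωd)]
    exact mul_le_of_le_one_right (by positivity) (Real.abs_sin_le_one _)
  have hb1 : ∀ τ : ℝ, |d τ - c / 2 * s τ| ≤ Real.exp (-c * τ / 2) * M := by
    intro τ
    have hE := (Real.exp_pos (-c * τ / 2)).le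
    have hM1 : 1 + c / 2 * (1 / ωd) ≤ M := by
      have t1 : (0:ℝ) ≤ c / 2 := by positivity
      have t2 : (0:ℝ) ≤ ωd ^ 2 * (1 / ωd) := by positivity
      rw [hMdef]; linarith
    calc |d τ - c / 2 * s τ| ≤ |d τ| + |c / 2 * s τ| := abs_sub _ _
      _ = |d τ| + c / 2 * |s τ| := by
          rw [abs_mul, abs_of_pos (by positivity : (0:ℝ) < c / 2)]
      _ ≤ Real.exp (-c * τ / 2) + c / 2 * (1 / ωd * Real.exp (-c * τ / 2)) := by
          have := mul_le_mul_of_nonneg_left (hsabs τ) (by positivity : (0:ℝ) ≤ c / 2)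
          linarith [hdabs τ]
      _ = Real.exp (-c * τ / 2) * (1 + c / 2 * (1 / ωd)) := by ring
      _ ≤ Real.exp (-c * τ / 2) * M := mul_le_mul_of_nonneg_left hM1 hE
  have hb2 : ∀ τ : ℝ, |c / 2 * d τ + ωd ^ 2 * s τ| ≤ Real.exp (-c * τ / 2) * M := by
    intro τ
    have hE := (Real.exp_pos (-c * τ / 2)).le
    have hM2 : c / 2 + ωd ^ 2 * (1 / ωd) ≤ M := by
      have t1 : (0:ℝ) ≤ c / 2 * (1 / ωd) := by positivity
      rw [hMdef]; linarith
    calc |c / 2 * d τ + ωd ^ 2 * s τ| ≤ |c / 2 * d τ| + |ωd ^ 2 * s τ| := abs_add_le _ _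
      _ = c / 2 * |d τ| + ωd ^ 2 * |s τ| := by
          rw [abs_mul, abs_mul, abs_of_pos (by positivity : (0:ℝ) < c / 2),
            abs_of_pos (by positivity : (0:ℝ) < ωd ^ 2)]
      _ ≤ c / 2 * Real.exp (-c * τ / 2) + ωd ^ 2 * (1 / ωd * Real.exp (-c * τ / 2)) := by
          have u1 := mul_le_mul_of_nonneg_left (hdabs τ) (by positivity : (0:ℝ) ≤ c / 2)
          have u2 := mul_le_mul_of_nonneg_left (hsabs τ) (by positivity : (0:ℝ) ≤ ωd ^ 2)
          linarith
      _ = Real.exp (-c * τ / 2) * (c / 2 + ωd ^ 2 * (1 / ωd)) := by ring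
      _ ≤ Real.exp (-c * τ / 2) * M := mul_le_mul_of_nonneg_left hM2 hE
  have hexple1 : ∀ τ : ℝ, 0 ≤ τ → Real.exp (-c * τ / 2) ≤ 1 := by
    intro τ hτ
    rw [← Real.exp_zero]
    exact Real.exp_le_exp.mpr (by nlinarith)
  have hexple2 : ∀ τ ∈ Set.Icc (0:ℝ) T,
      Real.exp (-c * τ / 2) ≤ Real.exp (c * T / 2) * Real.exp (-c * τ) := by
    intro τ hτ
    rw [← Real.exp_add]
    apply Real.exp_le_exp.mpr
    have := mul_le_mul_of_nonneg_left hτ.2 hc0.le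
    linarith
  set C : ℝ := Real.exp (c * T / 2) * M with hCdef
  have hCpos : 0 < C := by positivity
  set c₀ : ℝ := (T + 1) / 2 with hc₀def
  have hc₀pos : 0 < c₀ := by positivity
  set Q : ℝ := 2 * M * C * c₀ with hQdef
  have hQpos : 0 < Q := by positivity
  set K1 : ℝ := Q ^ 2 * T + 2 * Q * c₀ + 1 with hK1def
  have hK1pos : 0 < K1 := by positivity
  refine ⟨Real.sqrt K1 + 1, by positivity, ?_⟩
  intro F hF x hx
  subst hx
  set g₁ : ℝ → ℝ := fun τ => F τ * (d τ - c / 2 * s τ) with hg₁def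
  set g₂ : ℝ → ℝ := fun τ => F τ * (c / 2 * d τ + ωd ^ 2 * s τ) with hg₂def
  have hg₁c : ContinuousOn g₁ (Set.Icc 0 T) :=
    hF.mul ((hdc.sub (continuous_const.mul hsc)).continuousOn)
  have hg₂c : ContinuousOn g₂ (Set.Icc 0 T) :=
    hF.mul (((continuous_const.mul hdc).add (continuous_const.mul hsc)).continuousOn)
  have hg₁int : ∀ u ∈ Set.Icc (0:ℝ) T, IntervalIntegrable g₁ volume 0 u := by
    intro u hu
    apply ContinuousOn.intervalIntegrable
    rw [Set.uIcc_of_le hu.1]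
    exact hg₁c.mono (Set.Icc_subset_Icc le_rfl hu.2)
  have hg₂int : ∀ u ∈ Set.Icc (0:ℝ) T, IntervalIntegrable g₂ volume 0 u := by
    intro u hu
    apply ContinuousOn.intervalIntegrable
    rw [Set.uIcc_of_le hu.1]
    exact hg₂c.mono (Set.Icc_subset_Icc le_rfl hu.2)
  set A : ℝ → ℝ := fun t => ∫ τ in (0:ℝ)..t, g₁ τ with hAdef
  set B : ℝ → ℝ := fun t => ∫ τ in (0:ℝ)..t, g₂ τ with hBdef
  have hAc : ContinuousOn A (Set.Icc 0 T) := by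
    have hint : IntegrableOn g₁ (Set.uIcc (0:ℝ) T) volume := by
      rw [Set.uIcc_of_le hT.le]; exact hg₁c.integrableOn_compact isCompact_Icc
    have := intervalIntegral.continuousOn_primitive_interval (μ := volume) (a := (0:ℝ))
      (b := T) (f := g₁) hint
    rwa [Set.uIcc_of_le hT.le] at this
  have hBc : ContinuousOn B (Set.Icc 0 T) := by
    have hint : IntegrableOn g₂ (Set.uIcc (0:ℝ) T) volume := by
      rw [Set.uIcc_of_le hT.le]; exact hg₂c.integrableOn_compact isCompact_Icc
    have := intervalIntegral.continuousOn_primitive_interval (μ := volume) (a := (0:ℝ))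
      (b := T) (f := g₂) hint
    rwa [Set.uIcc_of_le hT.le] at this
  set h : ℝ → ℝ := fun t => (-(c / 2) * d t - ωd ^ 2 * s t) * A t
      + (d t - c / 2 * s t) * B t + Real.exp (-c * t) * F t with hhdef
  have hds2 : ∀ t : ℝ, d t ^ 2 + ωd ^ 2 * s t ^ 2 = Real.exp (-c * t) := by
    intro t
    rw [hd, hs]
    simp only
    have hinv : ωd * (1 / ωd) = 1 := by field_simp
    have e1 : Real.exp (-c * t / 2) ^ 2 = Real.exp (-c * t) := by
      rw [sq, ← Real.exp_add]; ring_nf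
    linear_combination Real.exp (-c * t / 2) ^ 2 * Real.cos_sq_add_sin_sq (ωd * t)
      + Real.exp (-c * t / 2) ^ 2 * Real.sin (ωd * t) ^ 2 * (ωd * (1 / ωd) + 1) * hinv + e1
  have hderiv : ∀ t ∈ Set.Ioo (0:ℝ) T,
      deriv (fun t => d t * A t + s t * B t) t = h t := by
    intro t ht
    have htI : t ∈ Set.Icc (0:ℝ) T := Set.mem_Icc_of_Ioo ht
    have hnb : Set.Icc (0:ℝ) T ∈ nhds t := Icc_mem_nhds ht.1 ht.2
    have hAd : HasDerivAt A (g₁ t) t :=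
      intervalIntegral.integral_hasDerivAt_right (hg₁int t htI)
        (AEStronglyMeasurable.stronglyMeasurableAtFilter_of_mem
          (hg₁c.aestronglyMeasurable measurableSet_Icc) hnb)
        (hg₁c.continuousAt hnb)
    have hBd : HasDerivAt B (g₂ t) t :=
      intervalIntegral.integral_hasDerivAt_right (hg₂int t htI)
        (AEStronglyMeasurable.stronglyMeasurableAtFilter_of_mem
          (hg₂c.aestronglyMeasurable measurableSet_Icc) hnb)
        (hg₂c.continuousAt hnb)
    have hxd : HasDerivAt (fun t => d t * A t + s t * B t)
        ((-(c / 2) * d t - ωd ^ 2 * s t) * A t + d t * g₁ t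
          + ((d t - c / 2 * s t) * B t + s t * g₂ t)) t :=
      ((hd' t).mul hAd).add ((hs' t).mul hBd)
    rw [hxd.deriv]
    simp only [hhdef, hg₁def, hg₂def]
    linear_combination F t * hds2 t
  set I : ℝ := ∫ τ in (0:ℝ)..T, Real.exp (-c * τ) * |F τ| with hIdef
  set N : ℝ := Real.sqrt (∫ t in (0:ℝ)..T, Real.exp (-2 * c * t) * F t ^ 2) with hNdef
  show Real.sqrt (∫ t in (0:ℝ)..T, deriv (fun t => d t * A t + s t * B t) t ^ 2) ≤
    (Real.sqrt K1 + 1) * (Real.sqrt (∫ t in (0:ℝ)..T, (d t * A t + s t * B t) ^ 2) + N)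
  have hIcont : ContinuousOn (fun τ => Real.exp (-c * τ) * |F τ|) (Set.Icc 0 T) :=
    (Real.continuous_exp.comp (continuous_const.mul continuous_id)).continuousOn.mul hF.abs
  have hIint : IntervalIntegrable (fun τ => Real.exp (-c * τ) * |F τ|) volume 0 T := by
    apply ContinuousOn.intervalIntegrable; rwa [Set.uIcc_of_le hT.le]
  have hInn : 0 ≤ I :=
    intervalIntegral.integral_nonneg hT.le (fun u _ => by positivity)
  have hNnn : 0 ≤ N := Real.sqrt_nonneg _
  have hwc : ContinuousOn (fun t => Real.exp (-2 * c * t) * F t ^ 2) (Set.Icc 0 T) :=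
    (Real.continuous_exp.comp (continuous_const.mul continuous_id)).continuousOn.mul (hF.pow 2)
  have hwint : IntervalIntegrable (fun t => Real.exp (-2 * c * t) * F t ^ 2) volume 0 T := by
    apply ContinuousOn.intervalIntegrable; rwa [Set.uIcc_of_le hT.le]
  have hwnn : 0 ≤ ∫ t in (0:ℝ)..T, Real.exp (-2 * c * t) * F t ^ 2 :=
    intervalIntegral.integral_nonneg hT.le (fun u _ => by positivity)
  have hN2 : N ^ 2 = ∫ t in (0:ℝ)..T, Real.exp (-2 * c * t) * F t ^ 2 := Real.sq_sqrt hwnn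
  have hICS : I ≤ c₀ * N := stmt11_cs T c hT F hF
  -- bounds on A and B
  have hgbd : ∀ g : ℝ → ℝ, ContinuousOn g (Set.Icc 0 T) →
      (∀ τ ∈ Set.Icc (0:ℝ) T, |g τ| ≤ C * (Real.exp (-c * τ) * |F τ|)) →
      ∀ t ∈ Set.Icc (0:ℝ) T, |∫ τ in (0:ℝ)..t, g τ| ≤ C * I := by
    intro g hgc hgle t ht
    have habs : |∫ τ in (0:ℝ)..t, g τ| ≤ ∫ τ in (0:ℝ)..t, |g τ| :=
      intervalIntegral.abs_integral_le_integral_abs ht.1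
    have h1 : (∫ τ in (0:ℝ)..t, |g τ|) ≤ ∫ τ in (0:ℝ)..t, C * (Real.exp (-c * τ) * |F τ|) := by
      apply intervalIntegral.integral_mono_on ht.1
      · apply ContinuousOn.intervalIntegrable
        rw [Set.uIcc_of_le ht.1]
        exact (hgc.mono (Set.Icc_subset_Icc le_rfl ht.2)).abs
      · apply ContinuousOn.intervalIntegrable
        rw [Set.uIcc_of_le ht.1]
        exact continuousOn_const.mul (hIcont.mono (Set.Icc_subset_Icc le_rfl ht.2))
      · intro τ hτ
        exact hgle τ (Set.Icc_subset_Icc le_rfl ht.2 hτ)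
    have h2 : (∫ τ in (0:ℝ)..t, C * (Real.exp (-c * τ) * |F τ|))
        = C * ∫ τ in (0:ℝ)..t, Real.exp (-c * τ) * |F τ| :=
      intervalIntegral.integral_const_mul _ _
    have h3 : (∫ τ in (0:ℝ)..t, Real.exp (-c * τ) * |F τ|) ≤ I := by
      rw [hIdef]
      apply intervalIntegral.integral_mono_interval le_rfl ht.1 ht.2
      · filter_upwards with τ
        positivity
      · exact hIint
    calc |∫ τ in (0:ℝ)..t, g τ| ≤ ∫ τ in (0:ℝ)..t, |g τ| := habs
      _ ≤ C * ∫ τ in (0:ℝ)..t, Real.exp (-c * τ) * |F τ| := by rw [← h2]; exact h1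
      _ ≤ C * I := mul_le_mul_of_nonneg_left h3 hCpos.le
  have hgle1 : ∀ τ ∈ Set.Icc (0:ℝ) T, |g₁ τ| ≤ C * (Real.exp (-c * τ) * |F τ|) := by
    intro τ hτ
    rw [hg₁def]
    simp only [abs_mul]
    calc |F τ| * |d τ - c / 2 * s τ|
        ≤ |F τ| * (Real.exp (-c * τ / 2) * M) :=
          mul_le_mul_of_nonneg_left (hb1 τ) (abs_nonneg _)
      _ ≤ |F τ| * (Real.exp (c * T / 2) * Real.exp (-c * τ) * M) :=
          mul_le_mul_of_nonneg_left
            (mul_le_mul_of_nonneg_right (hexple2 τ hτ) hMpos.le) (abs_nonneg _)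
      _ = C * (Real.exp (-c * τ) * |F τ|) := by rw [hCdef]; ring
  have hgle2 : ∀ τ ∈ Set.Icc (0:ℝ) T, |g₂ τ| ≤ C * (Real.exp (-c * τ) * |F τ|) := by
    intro τ hτ
    rw [hg₂def]
    simp only [abs_mul]
    calc |F τ| * |c / 2 * d τ + ωd ^ 2 * s τ|
        ≤ |F τ| * (Real.exp (-c * τ / 2) * M) :=
          mul_le_mul_of_nonneg_left (hb2 τ) (abs_nonneg _)
      _ ≤ |F τ| * (Real.exp (c * T / 2) * Real.exp (-c * τ) * M) :=
          mul_le_mul_of_nonneg_left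
            (mul_le_mul_of_nonneg_right (hexple2 τ hτ) hMpos.le) (abs_nonneg _)
      _ = C * (Real.exp (-c * τ) * |F τ|) := by rw [hCdef]; ring
  have hAbd : ∀ t ∈ Set.Icc (0:ℝ) T, |A t| ≤ C * I := hgbd g₁ hg₁c hgle1
  have hBbd : ∀ t ∈ Set.Icc (0:ℝ) T, |B t| ≤ C * I := hgbd g₂ hg₂c hgle2
  -- pointwise bound on h
  set P : ℝ := 2 * M * C * I with hPdef
  have hPnn : 0 ≤ P := by
    have : (0:ℝ) ≤ 2 * M * C := by positivity
    rw [hPdef]; exact mul_nonneg this hInn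
  have hhbd : ∀ t ∈ Set.Icc (0:ℝ) T, |h t| ≤ P + Real.exp (-c * t) * |F t| := by
    intro t ht
    have e1 : |(-(c / 2) * d t - ωd ^ 2 * s t)| ≤ M := by
      have hneg : -(c / 2) * d t - ωd ^ 2 * s t = -(c / 2 * d t + ωd ^ 2 * s t) := by ring
      rw [hneg, abs_neg]
      calc |c / 2 * d t + ωd ^ 2 * s t| ≤ Real.exp (-c * t / 2) * M := hb2 t
        _ ≤ 1 * M := mul_le_mul_of_nonneg_right (hexple1 t ht.1) hMpos.le
        _ = M := one_mul M
    have e2 : |d t - c / 2 * s t| ≤ M := by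
      calc |d t - c / 2 * s t| ≤ Real.exp (-c * t / 2) * M := hb1 t
        _ ≤ 1 * M := mul_le_mul_of_nonneg_right (hexple1 t ht.1) hMpos.le
        _ = M := one_mul M
    have e3 := hAbd t ht
    have e4 := hBbd t ht
    have hCInn : 0 ≤ C * I := mul_nonneg hCpos.le hInn
    rw [hhdef]
    simp only
    calc |(-(c / 2) * d t - ωd ^ 2 * s t) * A t + (d t - c / 2 * s t) * B t
          + Real.exp (-c * t) * F t|
        ≤ |(-(c / 2) * d t - ωd ^ 2 * s t) * A t + (d t - c / 2 * s t) * B t|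
          + |Real.exp (-c * t) * F t| := abs_add_le _ _
      _ ≤ |(-(c / 2) * d t - ωd ^ 2 * s t) * A t| + |(d t - c / 2 * s t) * B t|
          + |Real.exp (-c * t) * F t| := by
            linarith [abs_add_le ((-(c / 2) * d t - ωd ^ 2 * s t) * A t)
              ((d t - c / 2 * s t) * B t)]
      _ ≤ M * (C * I) + M * (C * I) + Real.exp (-c * t) * |F t| := by
            rw [abs_mul, abs_mul, abs_mul, Real.abs_exp]
            have m1 : |(-(c / 2) * d t - ωd ^ 2 * s t)| * |A t| ≤ M * (C * I) :=
              mul_le_mul e1 e3 (abs_nonneg _) hMpos.le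
            have m2 : |d t - c / 2 * s t| * |B t| ≤ M * (C * I) :=
              mul_le_mul e2 e4 (abs_nonneg _) hMpos.le
            linarith
      _ = P + Real.exp (-c * t) * |F t| := by rw [hPdef]; ring
  -- continuity of h
  have hcoef1 : Continuous fun t : ℝ => -(c / 2) * d t - ωd ^ 2 * s t :=
    (continuous_const.mul hdc).sub (continuous_const.mul hsc)
  have hcoef2 : Continuous fun t : ℝ => d t - c / 2 * s t :=
    hdc.sub (continuous_const.mul hsc)
  have hexpc : Continuous fun t : ℝ => Real.exp (-c * t) :=
    Real.continuous_exp.comp (continuous_const.mul continuous_id)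
  have hhc : ContinuousOn h (Set.Icc 0 T) := by
    rw [hhdef]
    exact ((hcoef1.continuousOn.mul hAc).add
      (hcoef2.continuousOn.mul hBc)).add (hexpc.continuousOn.mul hF)
  set φ : ℝ → ℝ := fun t => P + Real.exp (-c * t) * |F t| with hφdef
  have hφc : ContinuousOn φ (Set.Icc 0 T) := continuousOn_const.add hIcont
  -- integral comparison
  have hne : ∀ᵐ τ : ℝ, τ ≠ T := by
    rw [MeasureTheory.ae_iff]
    have hset : {τ : ℝ | ¬ τ ≠ T} = {T} := by ext τ; simp
    rw [hset, measure_singleton]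
  have hcong : (∫ t in (0:ℝ)..T, deriv (fun t => d t * A t + s t * B t) t ^ 2)
      = ∫ t in (0:ℝ)..T, h t ^ 2 := by
    apply intervalIntegral.integral_congr_ae
    filter_upwards [hne] with τ hτ hmem
    rw [Set.uIoc_of_le hT.le] at hmem
    rw [hderiv τ ⟨hmem.1, lt_of_le_of_ne hmem.2 hτ⟩]
  have hmono : (∫ t in (0:ℝ)..T, h t ^ 2) ≤ ∫ t in (0:ℝ)..T, φ t ^ 2 := by
    apply intervalIntegral.integral_mono_on hT.le
    · apply ContinuousOn.intervalIntegrable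
      rw [Set.uIcc_of_le hT.le]
      exact hhc.pow 2
    · apply ContinuousOn.intervalIntegrable
      rw [Set.uIcc_of_le hT.le]
      exact hφc.pow 2
    · intro t ht
      calc h t ^ 2 = |h t| ^ 2 := (sq_abs _).symm
        _ ≤ φ t ^ 2 := pow_le_pow_left₀ (abs_nonneg _) (hhbd t ht) 2
  have hφval : (∫ t in (0:ℝ)..T, φ t ^ 2)
      = P ^ 2 * T + 2 * P * I + ∫ t in (0:ℝ)..T, Real.exp (-2 * c * t) * F t ^ 2 := by
    have hsq : ∀ t : ℝ, φ t ^ 2 = P ^ 2 + 2 * P * (Real.exp (-c * t) * |F t|)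
        + Real.exp (-2 * c * t) * F t ^ 2 := by
      intro t
      have hu : (Real.exp (-c * t) * |F t|) ^ 2 = Real.exp (-2 * c * t) * F t ^ 2 := by
        rw [mul_pow, sq_abs, sq, ← Real.exp_add]
        ring_nf
      rw [hφdef]
      simp only
      calc (P + Real.exp (-c * t) * |F t|) ^ 2
          = P ^ 2 + 2 * P * (Real.exp (-c * t) * |F t|)
            + (Real.exp (-c * t) * |F t|) ^ 2 := by ring
        _ = _ := by rw [hu]
    rw [intervalIntegral.integral_congr (g := fun t => P ^ 2
        + 2 * P * (Real.exp (-c * t) * |F t|) + Real.exp (-2 * c * t) * F t ^ 2)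
        (fun t _ => hsq t)]
    rw [intervalIntegral.integral_add (intervalIntegrable_const.add (hIint.const_mul (2 * P)))
      hwint, intervalIntegral.integral_add intervalIntegrable_const (hIint.const_mul (2 * P)),
      intervalIntegral.integral_const, intervalIntegral.integral_const_mul]
    rw [← hIdef]
    simp only [smul_eq_mul, sub_zero]
    ring
  have hfinal : (∫ t in (0:ℝ)..T, h t ^ 2) ≤ K1 * N ^ 2 := by
    have hP2 : P ≤ Q * N := by
      calc P = 2 * M * C * I := hPdef
        _ ≤ 2 * M * C * (c₀ * N) := mul_le_mul_of_nonneg_left hICS (by positivity)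
        _ = Q * N := by rw [hQdef]; ring
    have hQN : 0 ≤ Q * N := mul_nonneg hQpos.le hNnn
    have h1 : P ^ 2 ≤ (Q * N) ^ 2 := pow_le_pow_left₀ hPnn hP2 2
    have h2 : P * I ≤ Q * N * (c₀ * N) := mul_le_mul hP2 hICS hInn hQN
    calc (∫ t in (0:ℝ)..T, h t ^ 2)
        ≤ P ^ 2 * T + 2 * P * I + ∫ t in (0:ℝ)..T, Real.exp (-2 * c * t) * F t ^ 2 := by
          rw [← hφval]; exact hmono
      _ = P ^ 2 * T + 2 * P * I + N ^ 2 := by rw [hN2]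
      _ ≤ (Q * N) ^ 2 * T + 2 * (Q * N * (c₀ * N)) + N ^ 2 := by
          have := mul_le_mul_of_nonneg_right h1 hT.le
          linarith
      _ = K1 * N ^ 2 := by rw [hK1def]; ring
  have main : Real.sqrt (∫ t in (0:ℝ)..T, deriv (fun t => d t * A t + s t * B t) t ^ 2)
      ≤ Real.sqrt K1 * N := by
    calc Real.sqrt (∫ t in (0:ℝ)..T, deriv (fun t => d t * A t + s t * B t) t ^ 2)
        = Real.sqrt (∫ t in (0:ℝ)..T, h t ^ 2) := by rw [hcong]
      _ ≤ Real.sqrt (K1 * N ^ 2) := Real.sqrt_le_sqrt hfinal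
      _ = Real.sqrt K1 * N := by rw [Real.sqrt_mul hK1pos.le, Real.sqrt_sq hNnn]
  refine le_trans main ?_
  exact stmt11_aux _ _ _ (Real.sqrt_nonneg _) (Real.sqrt_nonneg _) hNnn
end

section
/- Let k > 0, c ≥ 0, T̄ > 0, let u : [0, T̄] → ℝ be twice continuously differentiable with u(0) = u(T̄) = 0, and let f(t) = ü(t) + c·u̇(t) + k·u(t) be the corresponding excitation function. Then (1/2) e^{cT̄} u̇(T̄)² − (1/2) u̇(0)² = ∫₀^{T̄} e^{ct} f(t) u̇(t) dt − c ∫₀^{T̄} ℒ_c(u(t), u̇(t), t) dt, where ℒ_c(x, v, t) = (1/2) e^{ct} v² − (1/2) k e^{ct} x². -/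
/-- Conservation law in the dissipative setting. For a C² function `u` on
`[0, T̄]` with `u(0) = u(T̄) = 0` and excitation `f = ü + cu̇ + ku`,
`(1/2)e^{cT̄}u̇(T̄)² − (1/2)u̇(0)² = ∫₀^T̄ e^{ct} f u̇ − c∫₀^T̄ ℒ_c(u, u̇, t)`,
where `ℒ_c(x, v, t) = (1/2)e^{ct}v² − (1/2)ke^{ct}x²`. -/
theorem stmt12 (k c : ℝ) (hk : 0 < k) (hc0 : 0 ≤ c)
    (T : ℝ) (hT : 0 < T)
    (u u' u'' : ℝ → ℝ)
    (hu' : ∀ t ∈ Set.Icc (0:ℝ) T, HasDerivWithinAt u (u' t) (Set.Icc 0 T) t)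
    (hu'' : ∀ t ∈ Set.Icc (0:ℝ) T, HasDerivWithinAt u' (u'' t) (Set.Icc 0 T) t)
    (hu''cont : ContinuousOn u'' (Set.Icc 0 T))
    (h0 : u 0 = 0) (hTend : u T = 0)
    (f : ℝ → ℝ) (hf : f = fun t => u'' t + c * u' t + k * u t) :
    (1 / 2) * Real.exp (c * T) * (u' T) ^ 2 - (1 / 2) * (u' 0) ^ 2 =
      (∫ t in (0:ℝ)..T, Real.exp (c * t) * f t * u' t) -
        c * ∫ t in (0:ℝ)..T,
          ((1 / 2) * Real.exp (c * t) * (u' t) ^ 2 -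
           (1 / 2) * k * Real.exp (c * t) * (u t) ^ 2) := by
  set s := Set.Icc (0:ℝ) T with hs
  have hucont : ContinuousOn u s := fun t ht => (hu' t ht).continuousWithinAt
  have hu'cont : ContinuousOn u' s := fun t ht => (hu'' t ht).continuousWithinAt
  set g : ℝ → ℝ := fun t => (1/2) * Real.exp (c*t) * (u' t)^2 + (1/2) * k * Real.exp (c*t) * (u t)^2 with hg
  set g' : ℝ → ℝ := fun t => Real.exp (c*t) * f t * u' t -
      c * ((1/2) * Real.exp (c*t) * (u' t)^2 - (1/2) * k * Real.exp (c*t) * (u t)^2) with hg'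
  have hgderiv : ∀ t ∈ s, HasDerivWithinAt g (g' t) s t := by
    intro t ht
    have hexp : HasDerivWithinAt (fun t => Real.exp (c*t)) (c * Real.exp (c*t)) s t := by
      have := ((Real.hasDerivAt_exp (c*t)).comp t ((hasDerivAt_id t).const_mul c)).hasDerivWithinAt (s := s)
      exact this.congr_deriv (by ring)
    have h1 := (hexp.const_mul ((1:ℝ)/2)).mul ((hu'' t ht).pow 2)
    have h2 := (hexp.const_mul ((1/2)*k)).mul ((hu' t ht).pow 2)
    have h12 := h1.add h2
    convert h12 using 1
    · rfl
    · rfl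
    · rfl
    simp only [hg', hf]
    push_cast
    norm_num
    ring
  have hgcont : ContinuousOn g s := fun t ht => (hgderiv t ht).continuousWithinAt
  have hg'cont : ContinuousOn g' s := by
    have hfc : ContinuousOn f s := by
      rw [hf]
      exact hu''cont.add ((continuous_const.continuousOn).mul hu'cont) |>.add
        ((continuous_const.continuousOn).mul hucont)
    have hec : ContinuousOn (fun t => Real.exp (c*t)) s :=
      (Real.continuous_exp.comp (continuous_const.mul continuous_id)).continuousOn
    apply ContinuousOn.sub
    · exact (hec.mul hfc).mul hu'cont
    · exact (continuous_const.continuousOn).mul (((continuous_const.continuousOn.mul hec).mul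
        (hu'cont.pow 2)).sub ((continuous_const.continuousOn.mul hec).mul (hucont.pow 2)))
  have hint : ∫ t in (0:ℝ)..T, g' t = g T - g 0 := by
    apply intervalIntegral.integral_eq_sub_of_hasDeriv_right_of_le hT.le
    · exact hgcont
    · intro x hx
      have hx' : x ∈ s := Set.mem_Icc.2 ⟨hx.1.le, hx.2.le⟩
      have : HasDerivAt g (g' x) x := by
        have := hgderiv x hx'
        exact this.hasDerivAt (Icc_mem_nhds hx.1 hx.2)
      exact this.hasDerivWithinAt
    · exact (hg'cont.mono (by rw [Set.uIcc_of_le hT.le])).intervalIntegrable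
  have hiA : IntervalIntegrable (fun t => Real.exp (c*t) * f t * u' t) MeasureTheory.volume 0 T := by
    have hfc : ContinuousOn f s := by
      rw [hf]
      exact hu''cont.add ((continuous_const.continuousOn).mul hu'cont) |>.add
        ((continuous_const.continuousOn).mul hucont)
    have hec : ContinuousOn (fun t => Real.exp (c*t)) s :=
      (Real.continuous_exp.comp (continuous_const.mul continuous_id)).continuousOn
    exact (((hec.mul hfc).mul hu'cont).mono (by rw [Set.uIcc_of_le hT.le])).intervalIntegrable
  have hiB : IntervalIntegrable (fun t => (1/2) * Real.exp (c*t) * (u' t)^2 -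
      (1/2) * k * Real.exp (c*t) * (u t)^2) MeasureTheory.volume 0 T := by
    have hec : ContinuousOn (fun t => Real.exp (c*t)) s :=
      (Real.continuous_exp.comp (continuous_const.mul continuous_id)).continuousOn
    exact ((((continuous_const.continuousOn.mul hec).mul (hu'cont.pow 2)).sub
      ((continuous_const.continuousOn.mul hec).mul (hucont.pow 2))).mono
      (by rw [Set.uIcc_of_le hT.le])).intervalIntegrable
  have hsplit : ∫ t in (0:ℝ)..T, g' t =
      (∫ t in (0:ℝ)..T, Real.exp (c * t) * f t * u' t) -
        c * ∫ t in (0:ℝ)..T,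
          ((1 / 2) * Real.exp (c * t) * (u' t) ^ 2 -
           (1 / 2) * k * Real.exp (c * t) * (u t) ^ 2) := by
    rw [← intervalIntegral.integral_const_mul, ← intervalIntegral.integral_sub hiA (hiB.const_mul c)]
  rw [← hsplit, hint]
  simp [hg, h0, hTend, mul_comm]
end

section
/- Let k > 0, c > 0, T̄ > 0, let x : [0, T̄] → ℝ be twice continuously differentiable with f(t) = ẍ(t) + c·ẋ(t) + k·x(t) continuously differentiable, and write ‖g‖_c = (∫₀^{T̄} e^{ct} g(t)² dt)^{1/2} and ℋ(0) = (1/2)ẋ(0)² + (1/2)k x(0)². Then (1/2)‖ẋ‖_c² + (1/2) k ‖x‖_c² ≤ ( ‖f‖_c + (1/c)(e^{cT̄} − 1) ‖e^{−c·} f′(·)‖_c ) ‖x‖_c + (1/c)(e^{cT̄} − 1)( ℋ(0) − f(0)x(0) ). -/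
section Helpers

open Set intervalIntegral MeasureTheory

lemma cs_helper {a b : ℝ} (hab : a ≤ b) {u v : ℝ → ℝ}
    (hu : ContinuousOn u (Set.Icc a b)) (hv : ContinuousOn v (Set.Icc a b)) :
    ∫ t in a..b, u t * v t ≤
      Real.sqrt (∫ t in a..b, (u t)^2) * Real.sqrt (∫ t in a..b, (v t)^2) := by
  have huicc : Set.uIcc a b = Set.Icc a b := Set.uIcc_of_le hab
  have hui : IntervalIntegrable u MeasureTheory.volume a b :=
    (huicc ▸ hu : ContinuousOn u (Set.uIcc a b)).intervalIntegrable
  have hvi : IntervalIntegrable v MeasureTheory.volume a b :=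
    (huicc ▸ hv : ContinuousOn v (Set.uIcc a b)).intervalIntegrable
  have hu2 : IntervalIntegrable (fun t => (u t)^2) MeasureTheory.volume a b :=
    ((huicc ▸ hu : ContinuousOn u (Set.uIcc a b)).pow 2).intervalIntegrable
  have hv2 : IntervalIntegrable (fun t => (v t)^2) MeasureTheory.volume a b :=
    ((huicc ▸ hv : ContinuousOn v (Set.uIcc a b)).pow 2).intervalIntegrable
  have huv : IntervalIntegrable (fun t => u t * v t) MeasureTheory.volume a b :=
    ((huicc ▸ hu : ContinuousOn u (Set.uIcc a b)).mul
      (huicc ▸ hv : ContinuousOn v (Set.uIcc a b))).intervalIntegrable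
  set A := Real.sqrt (∫ t in a..b, (u t)^2) with hA
  set B := Real.sqrt (∫ t in a..b, (v t)^2) with hB
  have hA0 : 0 ≤ A := Real.sqrt_nonneg _
  have hB0 : 0 ≤ B := Real.sqrt_nonneg _
  have hA2 : A^2 = ∫ t in a..b, (u t)^2 :=
    Real.sq_sqrt (intervalIntegral.integral_nonneg hab (fun t _ => sq_nonneg _))
  have hB2 : B^2 = ∫ t in a..b, (v t)^2 :=
    Real.sq_sqrt (intervalIntegral.integral_nonneg hab (fun t _ => sq_nonneg _))
  have key : ∀ ε : ℝ, 0 < ε →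
      (∫ t in a..b, u t * v t) ≤ ε/2 * A^2 + 1/(2*ε) * B^2 := by
    intro ε hε
    have h2ε : (0:ℝ) < 2*ε := by linarith
    have pw : ∀ t ∈ Set.Icc a b, u t * v t ≤ ε/2 * (u t)^2 + 1/(2*ε) * (v t)^2 := by
      intro t _
      have heq : (ε*u t - v t)^2/(2*ε) = ε/2*(u t)^2 + 1/(2*ε)*(v t)^2 - u t * v t := by
        field_simp
        ring
      have hnn : 0 ≤ (ε*u t - v t)^2/(2*ε) := div_nonneg (sq_nonneg _) h2ε.le
      linarith [heq ▸ hnn]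
    calc (∫ t in a..b, u t * v t)
        ≤ ∫ t in a..b, (ε/2 * (u t)^2 + 1/(2*ε) * (v t)^2) :=
          intervalIntegral.integral_mono_on hab huv
            ((hu2.const_mul _).add (hv2.const_mul _)) pw
      _ = ε/2 * A^2 + 1/(2*ε) * B^2 := by
          rw [intervalIntegral.integral_add (hu2.const_mul _) (hv2.const_mul _),
            intervalIntegral.integral_const_mul, intervalIntegral.integral_const_mul, hA2, hB2]
  refine le_of_forall_pos_le_add ?_
  intro δ hδ
  set s := 2*δ/(A+B+1) with hs
  have hspos : 0 < s := by positivity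
  have hAs : 0 < A + s := by linarith
  have hBs : 0 < B + s := by linarith
  have hε : 0 < (B+s)/(A+s) := by positivity
  have h1 := key _ hε
  have expand : (B+s)/(A+s)/2 * A^2 + 1/(2*((B+s)/(A+s))) * B^2
      = A^2*(B+s)/(2*(A+s)) + B^2*(A+s)/(2*(B+s)) := by
    field_simp
  have e1 : A^2*(B+s)/(2*(A+s)) ≤ A*(B+s)/2 := by
    rw [div_le_div_iff₀ (by linarith) (by norm_num)]
    nlinarith [mul_nonneg (mul_nonneg hA0 hspos.le) hBs.le]
  have e2 : B^2*(A+s)/(2*(B+s)) ≤ B*(A+s)/2 := by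
    rw [div_le_div_iff₀ (by linarith) (by norm_num)]
    nlinarith [mul_nonneg (mul_nonneg hB0 hspos.le) hAs.le]
  have e3 : A*(B+s)/2 + B*(A+s)/2 = A*B + s*(A+B)/2 := by ring
  have e4 : s*(A+B)/2 ≤ δ := by
    rw [hs]
    rw [div_mul_eq_mul_div, div_div, div_le_iff₀ (by positivity)]
    nlinarith
  calc (∫ t in a..b, u t * v t) ≤ (B+s)/(A+s)/2 * A^2 + 1/(2*((B+s)/(A+s))) * B^2 := h1
    _ = A^2*(B+s)/(2*(A+s)) + B^2*(A+s)/(2*(B+s)) := expand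
    _ ≤ A*(B+s)/2 + B*(A+s)/2 := by linarith
    _ = A*B + s*(A+B)/2 := e3
    _ ≤ A*B + δ := by linarith

open Set intervalIntegral MeasureTheory

lemma ftc_right_helper {g : ℝ → ℝ} {T : ℝ} (hg : ContinuousOn g (Set.Icc 0 T))
    {t : ℝ} (ht : t ∈ Set.Ico (0:ℝ) T) :
    HasDerivWithinAt (fun u => ∫ s in (0:ℝ)..u, g s) (g t) (Set.Ici t) t := by
  have htIcc : t ∈ Set.Icc (0:ℝ) T := ⟨ht.1, ht.2.le⟩
  have hmem : Set.Icc (0:ℝ) T ∈ nhdsWithin t (Set.Ici t) :=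
    Icc_mem_nhdsGE_of_mem ⟨ht.1, ht.2⟩
  have hint : IntervalIntegrable g MeasureTheory.volume 0 t := by
    apply ContinuousOn.intervalIntegrable
    apply hg.mono
    rw [Set.uIcc_of_le ht.1]
    exact Set.Icc_subset_Icc le_rfl ht.2.le
  have hmem' : Set.Icc (0:ℝ) T ∈ nhdsWithin t (Set.Ioi t) :=
    nhdsWithin_mono t Set.Ioi_subset_Ici_self hmem
  have hmeas : StronglyMeasurableAtFilter g (nhdsWithin t (Set.Ioi t)) :=
    ⟨Set.Icc 0 T, hmem', hg.aestronglyMeasurable measurableSet_Icc⟩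
  have hcw : ContinuousWithinAt g (Set.Ioi t) t :=
    ((hg.continuousWithinAt htIcc).mono_of_mem_nhdsWithin hmem).mono Set.Ioi_subset_Ici_self
  exact intervalIntegral.integral_hasDerivWithinAt_right hint hmeas hcw

end Helpers

private lemma exp_sq' (a : ℝ) : Real.exp a ^ 2 = Real.exp (2*a) := by
  rw [sq, ← Real.exp_add]; ring_nf

/-- A priori bound from the dissipation law. With
`‖g‖_c = (∫₀^T̄ e^{ct}g(t)² dt)^{1/2}` and `ℋ(0) = (1/2)ẋ(0)² + (1/2)kx(0)²`,
`(1/2)‖ẋ‖_c² + (1/2)k‖x‖_c² ≤ (‖f‖_c + (1/c)(e^{cT̄} − 1)‖e^{-c·}f'‖_c)‖x‖_c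
  + (1/c)(e^{cT̄} − 1)(ℋ(0) − f(0)x(0))`. -/
theorem stmt15 (k c : ℝ) (hk : 0 < k) (hc0 : 0 < c)
    (T : ℝ) (hT : 0 < T)
    (x x' x'' : ℝ → ℝ)
    (hx' : ∀ t ∈ Set.Icc (0:ℝ) T, HasDerivWithinAt x (x' t) (Set.Icc 0 T) t)
    (hx'' : ∀ t ∈ Set.Icc (0:ℝ) T, HasDerivWithinAt x' (x'' t) (Set.Icc 0 T) t)
    (hx''cont : ContinuousOn x'' (Set.Icc 0 T))
    (f f' : ℝ → ℝ) (hf : f = fun t => x'' t + c * x' t + k * x t)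
    (hf' : ∀ t ∈ Set.Icc (0:ℝ) T, HasDerivWithinAt f (f' t) (Set.Icc 0 T) t)
    (hf'cont : ContinuousOn f' (Set.Icc 0 T))
    (normc : (ℝ → ℝ) → ℝ)
    (hnormc : normc = fun g => Real.sqrt (∫ t in (0:ℝ)..T, Real.exp (c * t) * g t ^ 2))
    (H0 : ℝ) (hH0 : H0 = (1 / 2) * (x' 0) ^ 2 + (1 / 2) * k * (x 0) ^ 2) :
    (1 / 2) * (normc x') ^ 2 + (1 / 2) * k * (normc x) ^ 2 ≤
      (normc f + (1 / c) * (Real.exp (c * T) - 1) *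
          normc (fun t => Real.exp (-c * t) * f' t)) * normc x +
        (1 / c) * (Real.exp (c * T) - 1) * (H0 - f 0 * x 0) := by
  subst hnormc hH0
  simp only []
  have hT0 : (0:ℝ) ≤ T := hT.le
  have huicc : Set.uIcc (0:ℝ) T = Set.Icc (0:ℝ) T := Set.uIcc_of_le hT0
  have hxc : ContinuousOn x (Set.Icc (0:ℝ) T) := fun t ht => (hx' t ht).continuousWithinAt
  have hx'c : ContinuousOn x' (Set.Icc (0:ℝ) T) := fun t ht => (hx'' t ht).continuousWithinAt
  have hfc : ContinuousOn f (Set.Icc (0:ℝ) T) := fun t ht => (hf' t ht).continuousWithinAt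
  have hec : ∀ a : ℝ, Continuous fun t : ℝ => Real.exp (a * t) :=
    fun a => Real.continuous_exp.comp (continuous_const.mul continuous_id)
  have hec2 : ∀ a : ℝ, Continuous fun t : ℝ => Real.exp (a * t / 2) :=
    fun a => Real.continuous_exp.comp ((continuous_const.mul continuous_id).div_const 2)
  have hf'x : ContinuousOn (fun s => f' s * x s) (Set.Icc (0:ℝ) T) := hf'cont.mul hxc
  have hx'2 : ContinuousOn (fun s => (x' s)^2) (Set.Icc (0:ℝ) T) := hx'c.pow 2
  set G : ℝ → ℝ := fun t => ∫ s in (0:ℝ)..t, f' s * x s with hGdef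
  set Cx : ℝ → ℝ := fun t => ∫ s in (0:ℝ)..t, (x' s)^2 with hCdef
  -- continuity of primitives
  have hGc : ContinuousOn G (Set.Icc (0:ℝ) T) := by
    rw [← huicc]
    exact intervalIntegral.continuousOn_primitive_interval (huicc ▸ hf'x.integrableOn_Icc)
  have hCc : ContinuousOn Cx (Set.Icc (0:ℝ) T) := by
    rw [← huicc]
    exact intervalIntegral.continuousOn_primitive_interval (huicc ▸ hx'2.integrableOn_Icc)
  set Φ : ℝ → ℝ := fun u => 1/2*(x' u)^2 + 1/2*k*(x u)^2 - f u * x u + G u + c * Cx u with hΦdef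
  have hΦc : ContinuousOn Φ (Set.Icc (0:ℝ) T) :=
    ((((continuousOn_const.mul (hx'c.pow 2)).add (continuousOn_const.mul (hxc.pow 2))).sub
      (hfc.mul hxc)).add hGc).add (continuousOn_const.mul hCc)
  have hderiv : ∀ t ∈ Set.Ico (0:ℝ) T, HasDerivWithinAt Φ 0 (Set.Ici t) t := by
    intro t ht
    have htIcc : t ∈ Set.Icc (0:ℝ) T := ⟨ht.1, ht.2.le⟩
    have hmem : Set.Icc (0:ℝ) T ∈ nhdsWithin t (Set.Ici t) :=
      Icc_mem_nhdsGE_of_mem ⟨ht.1, ht.2⟩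
    have h1 := (hx' t htIcc).mono_of_mem_nhdsWithin hmem
    have h2 := (hx'' t htIcc).mono_of_mem_nhdsWithin hmem
    have h3 := (hf' t htIcc).mono_of_mem_nhdsWithin hmem
    have hGd : HasDerivWithinAt G (f' t * x t) (Set.Ici t) t := ftc_right_helper hf'x ht
    have hCd : HasDerivWithinAt Cx ((x' t)^2) (Set.Ici t) t := ftc_right_helper hx'2 ht
    have big : HasDerivWithinAt Φ
        (1/2*(((2:ℕ):ℝ) * x' t ^ (2-1) * x'' t) + 1/2*k*(((2:ℕ):ℝ) * x t ^ (2-1) * x' t)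
          - (f' t * x t + f t * x' t) + f' t * x t + c * (x' t)^2) (Set.Ici t) t :=
      (((((h2.pow (n := 2)).const_mul (1/2:ℝ)).add
        ((h1.pow (n := 2)).const_mul (1/2*k))).sub (h3.mul h1)).add hGd).add
        (hCd.const_mul c)
    convert big using 1
    simp only [hf]
    push_cast
    ring
  have hconst := constant_of_has_deriv_right_zero hΦc hderiv
  have hG0 : G 0 = 0 := intervalIntegral.integral_same
  have hC0 : Cx 0 = 0 := intervalIntegral.integral_same
  set K : ℝ := 1/2*(x' 0)^2 + 1/2*k*(x 0)^2 - f 0 * x 0 with hKdef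
  have hΦ0 : Φ 0 = K := by simp only [hΦdef, hG0, hC0, hKdef]; ring
  -- bound on |G t|
  set Nf' : ℝ := Real.sqrt (∫ t in (0:ℝ)..T, Real.exp (c*t) * (Real.exp (-c*t) * f' t)^2)
    with hNf'def
  set Nx : ℝ := Real.sqrt (∫ t in (0:ℝ)..T, Real.exp (c*t) * (x t)^2) with hNxdef
  set D : ℝ := Nf' * Nx with hDdef
  have hNf'0 : 0 ≤ Nf' := Real.sqrt_nonneg _
  have hNx0 : 0 ≤ Nx := Real.sqrt_nonneg _
  have hu2eq : ∀ s : ℝ, (Real.exp (-(c*s)/2) * f' s)^2 = Real.exp (c*s) * (Real.exp (-c*s) * f' s)^2 := by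
    intro s
    rw [mul_pow, mul_pow, exp_sq', exp_sq', ← mul_assoc, ← Real.exp_add]
    congr 2
    ring
  have hv2eq : ∀ s : ℝ, (Real.exp (c*s/2) * x s)^2 = Real.exp (c*s) * (x s)^2 := by
    intro s
    rw [mul_pow, exp_sq']
    congr 2
    ring
  have huveq : ∀ s : ℝ, (Real.exp (-(c*s)/2) * f' s) * (Real.exp (c*s/2) * x s) = f' s * x s := by
    intro s
    have h1 : Real.exp (-(c*s)/2) * Real.exp (c*s/2) = 1 := by
      rw [← Real.exp_add, show -(c*s)/2 + c*s/2 = 0 by ring, Real.exp_zero]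
    calc (Real.exp (-(c*s)/2) * f' s) * (Real.exp (c*s/2) * x s)
        = (Real.exp (-(c*s)/2) * Real.exp (c*s/2)) * (f' s * x s) := by ring
      _ = f' s * x s := by rw [h1, one_mul]
  have hGb : ∀ t ∈ Set.Icc (0:ℝ) T, |G t| ≤ D := by
    intro t ht
    have h0t : (0:ℝ) ≤ t := ht.1
    have hsub : Set.Icc (0:ℝ) t ⊆ Set.Icc (0:ℝ) T := Set.Icc_subset_Icc le_rfl ht.2
    set u : ℝ → ℝ := fun s => Real.exp (-(c*s)/2) * f' s with hudef
    set v : ℝ → ℝ := fun s => Real.exp (c*s/2) * x s with hvdef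
    have huc : ContinuousOn u (Set.Icc 0 t) :=
      ((hec2 (-c)).congr (by intro s; simp only [neg_mul]) |>.continuousOn).mul (hf'cont.mono hsub)
    have hvc : ContinuousOn v (Set.Icc 0 t) := (hec2 c).continuousOn.mul (hxc.mono hsub)
    have huIcct : Set.uIcc (0:ℝ) t = Set.Icc (0:ℝ) t := Set.uIcc_of_le h0t
    -- rewrite G t
    have hGt : G t = ∫ s in (0:ℝ)..t, u s * v s :=
      (intervalIntegral.integral_congr (fun s _ => (huveq s).symm))
    have hGtneg : -G t = ∫ s in (0:ℝ)..t, (-u s) * v s := by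
      rw [hGt, ← intervalIntegral.integral_neg]
      apply intervalIntegral.integral_congr
      intro s _
      ring
    -- sqrt factor bounds
    have hint1 : IntervalIntegrable (fun s => Real.exp (c*s) * (Real.exp (-c*s) * f' s)^2)
        MeasureTheory.volume 0 T := by
      apply ContinuousOn.intervalIntegrable
      rw [huicc]
      exact (hec c).continuousOn.mul
        (((hec (-c)).continuousOn.mul hf'cont).pow 2)
    have hint2 : IntervalIntegrable (fun s => Real.exp (c*s) * (x s)^2)
        MeasureTheory.volume 0 T := by
      apply ContinuousOn.intervalIntegrable
      rw [huicc]
      exact (hec c).continuousOn.mul (hxc.pow 2)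
    have hfac1 : Real.sqrt (∫ s in (0:ℝ)..t, (u s)^2) ≤ Nf' := by
      rw [hNf'def]
      apply Real.sqrt_le_sqrt
      rw [show (∫ s in (0:ℝ)..t, (u s)^2)
          = ∫ s in (0:ℝ)..t, Real.exp (c*s) * (Real.exp (-c*s) * f' s)^2 from
        intervalIntegral.integral_congr (fun s _ => hu2eq s)]
      exact intervalIntegral.integral_mono_interval le_rfl h0t ht.2
        (Filter.Eventually.of_forall (fun s => by positivity)) hint1
    have hfac2 : Real.sqrt (∫ s in (0:ℝ)..t, (v s)^2) ≤ Nx := by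
      rw [hNxdef]
      apply Real.sqrt_le_sqrt
      rw [show (∫ s in (0:ℝ)..t, (v s)^2)
          = ∫ s in (0:ℝ)..t, Real.exp (c*s) * (x s)^2 from
        intervalIntegral.integral_congr (fun s _ => hv2eq s)]
      exact intervalIntegral.integral_mono_interval le_rfl h0t ht.2
        (Filter.Eventually.of_forall (fun s => by positivity)) hint2
    have prodle : Real.sqrt (∫ s in (0:ℝ)..t, (u s)^2) * Real.sqrt (∫ s in (0:ℝ)..t, (v s)^2) ≤ D := by
      rw [hDdef]
      exact mul_le_mul hfac1 hfac2 (Real.sqrt_nonneg _) hNf'0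
    have hcs1 : G t ≤ D := by
      rw [hGt]
      exact le_trans (cs_helper h0t huc hvc) prodle
    have hcs2 : -G t ≤ D := by
      rw [hGtneg]
      refine le_trans (cs_helper h0t huc.neg hvc) ?_
      rw [show (∫ s in (0:ℝ)..t, (-u s)^2) = ∫ s in (0:ℝ)..t, (u s)^2 by
        apply intervalIntegral.integral_congr; intro s _; ring]
      exact prodle
    exact abs_le.2 ⟨by linarith, hcs1⟩
  -- pointwise energy bound
  have hEb : ∀ t ∈ Set.Icc (0:ℝ) T,
      1/2*(x' t)^2 + 1/2*k*(x t)^2 ≤ f t * x t + (K + D) := by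
    intro t ht
    have h := hconst t ht
    rw [hΦ0] at h
    simp only [hΦdef] at h
    have hCnn : 0 ≤ Cx t := intervalIntegral.integral_nonneg ht.1 (fun s _ => sq_nonneg _)
    have hGb' := hGb t ht
    have h1 : -D ≤ G t := (abs_le.1 hGb').1
    nlinarith [mul_nonneg hc0.le hCnn]
  -- integrate the weighted bound
  have hExw : IntervalIntegrable (fun t => Real.exp (c*t) * (1/2*(x' t)^2 + 1/2*k*(x t)^2))
      MeasureTheory.volume 0 T := by
    apply ContinuousOn.intervalIntegrable
    rw [huicc]
    exact (hec c).continuousOn.mul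
      ((continuousOn_const.mul (hx'c.pow 2)).add (continuousOn_const.mul (hxc.pow 2)))
  have hfxw : IntervalIntegrable (fun t => Real.exp (c*t) * (f t * x t))
      MeasureTheory.volume 0 T := by
    apply ContinuousOn.intervalIntegrable
    rw [huicc]
    exact (hec c).continuousOn.mul (hfc.mul hxc)
  have hconstw : IntervalIntegrable (fun t => Real.exp (c*t) * (K + D))
      MeasureTheory.volume 0 T := ((hec c).intervalIntegrable 0 T).mul_const _
  have step1 : (∫ t in (0:ℝ)..T, Real.exp (c*t) * (1/2*(x' t)^2 + 1/2*k*(x t)^2))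
      ≤ (∫ t in (0:ℝ)..T, Real.exp (c*t) * (f t * x t)) +
        (∫ t in (0:ℝ)..T, Real.exp (c*t)) * (K + D) := by
    have mono := intervalIntegral.integral_mono_on hT0 hExw (hfxw.add hconstw)
      (fun t ht => by
        have := hEb t ht
        have heb : Real.exp (c*t) * (1/2*(x' t)^2 + 1/2*k*(x t)^2)
            ≤ Real.exp (c*t) * (f t * x t + (K + D)) :=
          mul_le_mul_of_nonneg_left this (Real.exp_nonneg _)
        calc Real.exp (c*t) * (1/2*(x' t)^2 + 1/2*k*(x t)^2)
            ≤ Real.exp (c*t) * (f t * x t + (K + D)) := heb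
          _ = Real.exp (c*t) * (f t * x t) + Real.exp (c*t) * (K + D) := by ring)
    rw [intervalIntegral.integral_add hfxw hconstw, intervalIntegral.integral_mul_const] at mono
    exact mono
  -- value of ∫ exp(ct)
  have hexpint : (∫ t in (0:ℝ)..T, Real.exp (c*t)) = (Real.exp (c*T) - 1)/c := by
    have hd : ∀ t ∈ Set.uIcc (0:ℝ) T, HasDerivAt (fun u => Real.exp (c*u)/c) (Real.exp (c*t)) t := by
      intro t _
      have h1 : HasDerivAt (fun u : ℝ => c*u) (c*1) t := (hasDerivAt_id t).const_mul c
      have h2 := ((Real.hasDerivAt_exp (c*t)).comp t h1).div_const c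
      rw [mul_one, mul_div_assoc, div_self hc0.ne', mul_one] at h2
      exact h2
    rw [intervalIntegral.integral_eq_sub_of_hasDerivAt hd ((hec c).intervalIntegrable 0 T)]
    rw [mul_zero, Real.exp_zero]
    ring
  -- LHS identification
  have hintx' : IntervalIntegrable (fun t => Real.exp (c*t) * (x' t)^2) MeasureTheory.volume 0 T := by
    apply ContinuousOn.intervalIntegrable
    rw [huicc]
    exact (hec c).continuousOn.mul (hx'c.pow 2)
  have hintx : IntervalIntegrable (fun t => Real.exp (c*t) * (x t)^2) MeasureTheory.volume 0 T := by
    apply ContinuousOn.intervalIntegrable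
    rw [huicc]
    exact (hec c).continuousOn.mul (hxc.pow 2)
  have hLHS : (∫ t in (0:ℝ)..T, Real.exp (c*t) * (1/2*(x' t)^2 + 1/2*k*(x t)^2))
      = 1/2 * (∫ t in (0:ℝ)..T, Real.exp (c*t) * (x' t)^2)
        + 1/2*k * (∫ t in (0:ℝ)..T, Real.exp (c*t) * (x t)^2) := by
    rw [show (fun t => Real.exp (c*t) * (1/2*(x' t)^2 + 1/2*k*(x t)^2))
        = fun t => 1/2 * (Real.exp (c*t) * (x' t)^2) + 1/2*k * (Real.exp (c*t) * (x t)^2) by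
      funext t; ring]
    rw [intervalIntegral.integral_add (hintx'.const_mul _) (hintx.const_mul _),
      intervalIntegral.integral_const_mul, intervalIntegral.integral_const_mul]
  have hsq1 : Real.sqrt (∫ t in (0:ℝ)..T, Real.exp (c*t) * (x' t)^2) ^ 2
      = ∫ t in (0:ℝ)..T, Real.exp (c*t) * (x' t)^2 :=
    Real.sq_sqrt (intervalIntegral.integral_nonneg hT0 (fun t _ => by positivity))
  have hsq2 : Nx ^ 2 = ∫ t in (0:ℝ)..T, Real.exp (c*t) * (x t)^2 :=
    Real.sq_sqrt (intervalIntegral.integral_nonneg hT0 (fun t _ => by positivity))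
  -- Cauchy-Schwarz for the f·x term
  have hfx_cs : (∫ t in (0:ℝ)..T, Real.exp (c*t) * (f t * x t))
      ≤ Real.sqrt (∫ t in (0:ℝ)..T, Real.exp (c*t) * (f t)^2) * Nx := by
    set u : ℝ → ℝ := fun s => Real.exp (c*s/2) * f s with hudef
    set v : ℝ → ℝ := fun s => Real.exp (c*s/2) * x s with hvdef
    have huc : ContinuousOn u (Set.Icc (0:ℝ) T) := (hec2 c).continuousOn.mul hfc
    have hvc : ContinuousOn v (Set.Icc (0:ℝ) T) := (hec2 c).continuousOn.mul hxc
    have h1 : (∫ t in (0:ℝ)..T, Real.exp (c*t) * (f t * x t)) = ∫ t in (0:ℝ)..T, u t * v t := by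
      apply intervalIntegral.integral_congr
      intro s _
      simp only [hudef, hvdef]
      have he : Real.exp (c*s/2) * Real.exp (c*s/2) = Real.exp (c*s) := by
        rw [← Real.exp_add]; congr 1; ring
      calc Real.exp (c*s) * (f s * x s)
          = (Real.exp (c*s/2) * Real.exp (c*s/2)) * (f s * x s) := by rw [he]
        _ = (Real.exp (c*s/2) * f s) * (Real.exp (c*s/2) * x s) := by ring
    have h2 : (∫ t in (0:ℝ)..T, (u t)^2) = ∫ t in (0:ℝ)..T, Real.exp (c*t) * (f t)^2 := by
      apply intervalIntegral.integral_congr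
      intro s _
      simp only [hudef]
      rw [mul_pow, exp_sq']
      congr 2
      ring
    have h3 : (∫ t in (0:ℝ)..T, (v t)^2) = ∫ t in (0:ℝ)..T, Real.exp (c*t) * (x t)^2 :=
      intervalIntegral.integral_congr (fun s _ => hv2eq s)
    rw [h1, hNxdef, ← h2, ← h3]
    exact cs_helper hT0 huc hvc
  -- assemble
  have hexp1 : (1:ℝ) ≤ Real.exp (c*T) := by
    rw [show (1:ℝ) = Real.exp 0 from (Real.exp_zero).symm]
    exact Real.exp_le_exp.2 (by positivity)
  have hKD : (∫ t in (0:ℝ)..T, Real.exp (c*t)) * (K + D)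
      = (1/c) * (Real.exp (c*T) - 1) * K + (1/c) * (Real.exp (c*T) - 1) * D := by
    rw [hexpint]; ring
  have final : 1/2 * (∫ t in (0:ℝ)..T, Real.exp (c*t) * (x' t)^2)
        + 1/2*k * (∫ t in (0:ℝ)..T, Real.exp (c*t) * (x t)^2)
      ≤ Real.sqrt (∫ t in (0:ℝ)..T, Real.exp (c*t) * (f t)^2) * Nx
        + (1/c) * (Real.exp (c*T) - 1) * K + (1/c) * (Real.exp (c*T) - 1) * D := by
    rw [← hLHS]
    calc (∫ t in (0:ℝ)..T, Real.exp (c*t) * (1/2*(x' t)^2 + 1/2*k*(x t)^2))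
        ≤ (∫ t in (0:ℝ)..T, Real.exp (c*t) * (f t * x t)) +
          (∫ t in (0:ℝ)..T, Real.exp (c*t)) * (K + D) := step1
      _ = (∫ t in (0:ℝ)..T, Real.exp (c*t) * (f t * x t))
            + (1/c) * (Real.exp (c*T) - 1) * K + (1/c) * (Real.exp (c*T) - 1) * D := by
          rw [hKD]; ring
      _ ≤ _ := by linarith [hfx_cs]
  -- match with goal
  rw [← hsq1, ← hsq2, hDdef] at final
  refine final.trans (le_of_eq ?_)
  ring
end
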